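/- arXiv:1511.09277 — 2 statements merged into one kernel-verified Lean document; each statement's English description precedes it below -/
import Mathlib

section
/- Let G be a finite bipartite graph with bipartition (X, Y) that contains a 1-anti-factor, i.e., a spanning subgraph F with d_F(x) = 1 for all x ∈ X and d_F(y) ≠ 1 for all y ∈ Y. Then for every subset S ⊆ X, the number of connected components of G − S that do not themselves contain a 1-anti-factor (with respect to the induced bipartition) is at most |S|. -/
attribute [local instance] Classical.propDecidable

theorem stmt_3 {V : Type*} [Fintype V] (G : SimpleGraph V)
    (X Y : Finset V) (hdisj : Disjoint X Y) (hcover : X ∪ Y = Finset.univ)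
    (hbip : ∀ u v : V, G.Adj u v → (u ∈ X ∧ v ∈ Y) ∨ (u ∈ Y ∧ v ∈ X))
    (hanti : ∃ F : SimpleGraph V, F ≤ G ∧ (∀ x ∈ X, F.degree x = 1) ∧
      (∀ y ∈ Y, F.degree y ≠ 1))
    (S : Finset V) (hS : S ⊆ X) :
    Set.ncard {c : (G.induce {v : V | v ∉ S}).ConnectedComponent |
      ¬ ∃ F : SimpleGraph {v : V | v ∉ S},
          F ≤ G.induce {v : V | v ∉ S} ∧
          (∀ v ∈ c.supp, ((v : V) ∈ X → F.degree v = 1) ∧ ((v : V) ∈ Y → F.degree v ≠ 1)) ∧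
          (∀ v ∉ c.supp, F.degree v = 0)} ≤ S.card := by
  classical
  obtain ⟨F, hFG, hFX, hFY⟩ := hanti
  set T : Set V := {v : V | v ∉ S} with hT
  set H := G.induce T with hH
  set Bad : Set H.ConnectedComponent :=
    {c : H.ConnectedComponent | ¬ ∃ F' : SimpleGraph T, F' ≤ H ∧
        (∀ v ∈ c.supp, ((v : V) ∈ X → F'.degree v = 1) ∧ ((v : V) ∈ Y → F'.degree v ≠ 1)) ∧
        (∀ v ∉ c.supp, F'.degree v = 0)} with hBad
  have hsame : ∀ u v : T, F.Adj ↑u ↑v →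
      H.connectedComponentMk u = H.connectedComponentMk v := by
    intro u v h
    have hadj : H.Adj u v := hFG h
    exact SimpleGraph.ConnectedComponent.sound hadj.reachable
  have key : ∀ c : H.ConnectedComponent, c ∈ Bad →
      ∃ s : V, s ∈ S ∧ ∃ v : T, H.connectedComponentMk v = c ∧ F.Adj ↑v s := by
    intro c hc
    by_contra hno
    push_neg at hno
    apply hc
    set F' : SimpleGraph T :=
      { Adj := fun u v => F.Adj ↑u ↑v ∧ H.connectedComponentMk u = c ∧
          H.connectedComponentMk v = c,
        symm := ⟨fun u v ⟨h1, h2, h3⟩ => ⟨h1.symm, h3, h2⟩⟩,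
        loopless := ⟨fun u ⟨h1, _⟩ => F.loopless.irrefl _ h1⟩ } with hF'
    have hF'adj : ∀ u v : T, F'.Adj u v ↔ (F.Adj ↑u ↑v ∧ H.connectedComponentMk u = c ∧
        H.connectedComponentMk v = c) := fun u v => Iff.rfl
    refine ⟨F', ?_, ?_, ?_⟩
    · intro u v huv
      exact hFG huv.1
    · intro v hv
      rw [SimpleGraph.ConnectedComponent.mem_supp_iff] at hv
      have hdeg : F'.degree v = F.degree (↑v : V) := by
        unfold SimpleGraph.degree
        apply Finset.card_bij (fun (u : T) _ => (↑u : V))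
        · intro u hu
          rw [SimpleGraph.mem_neighborFinset] at hu
          rw [SimpleGraph.mem_neighborFinset]
          exact hu.1
        · intro u _ w _ h; exact Subtype.ext h
        · intro w hw
          rw [SimpleGraph.mem_neighborFinset] at hw
          have hwT : w ∈ T := by
            intro hwS
            exact hno w hwS v hv hw
          refine ⟨⟨w, hwT⟩, ?_, rfl⟩
          rw [SimpleGraph.mem_neighborFinset]
          exact ⟨hw, hv, ((hsame v ⟨w, hwT⟩ hw).symm.trans hv)⟩
      constructor
      · intro hX
        convert hdeg.trans (hFX _ hX) using 2
      · intro hY hdeg1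
        refine hFY _ hY (hdeg.symm.trans ?_)
        convert hdeg1 using 2
    · intro v hv
      rw [SimpleGraph.ConnectedComponent.mem_supp_iff] at hv
      rw [SimpleGraph.degree, Finset.card_eq_zero, Finset.eq_empty_iff_forall_notMem]
      intro u hu
      rw [SimpleGraph.mem_neighborFinset] at hu
      exact hv hu.2.1
  choose f hfS g hg1 hg2 using key
  have hinj : Function.Injective (fun c : Bad => (⟨f c c.2, hfS c c.2⟩ : S)) := by
    intro c₁ c₂ h
    simp only [Subtype.mk.injEq] at h
    have hs1 : F.degree (f c₁ c₁.2) = 1 := hFX _ (hS (hfS c₁ c₁.2))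
    have hm1 : (↑(g c₁ c₁.2) : V) ∈ F.neighborFinset (f c₁ c₁.2) := by
      rw [SimpleGraph.mem_neighborFinset]; exact (hg2 c₁ c₁.2).symm
    have hm2 : (↑(g c₂ c₂.2) : V) ∈ F.neighborFinset (f c₁ c₁.2) := by
      rw [SimpleGraph.mem_neighborFinset]
      exact (h ▸ (hg2 c₂ c₂.2)).symm
    have heq : (↑(g c₁ c₁.2) : V) = ↑(g c₂ c₂.2) :=
      Finset.card_le_one.mp (le_of_eq hs1) _ hm1 _ hm2
    have : g c₁ c₁.2 = g c₂ c₂.2 := Subtype.ext heq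
    have : (c₁ : H.ConnectedComponent) = c₂ :=
      (hg1 c₁ c₁.2).symm.trans (this ▸ (hg1 c₂ c₂.2))
    exact Subtype.ext this
  calc Set.ncard Bad = Nat.card Bad := (Nat.card_coe_set_eq _).symm
    _ ≤ Nat.card S := Nat.card_le_card_of_injective _ hinj
    _ = S.card := Nat.card_eq_finsetCard S
end

section
/- Let k ≥ 1, let G be a k-regular bipartite graph with bipartition (X, Y), and let S ⊆ X. Then the number of connected components C of G − S satisfying |V(C) ∩ X| < |V(C) ∩ Y| is at most |S|. -/
attribute [local instance] Classical.propDecidable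

theorem stmt_5 {V : Type*} [Fintype V] (G : SimpleGraph V) (k : ℕ) (hk : 1 ≤ k)
    (X Y : Finset V) (hdisj : Disjoint X Y) (hcover : X ∪ Y = Finset.univ)
    (hbip : ∀ u v : V, G.Adj u v → (u ∈ X ∧ v ∈ Y) ∨ (u ∈ Y ∧ v ∈ X))
    (hreg : ∀ v : V, G.degree v = k)
    (S : Finset V) (hS : S ⊆ X) :
    Set.ncard {c : (G.induce {v : V | v ∉ S}).ConnectedComponent |
      ((Subtype.val '' c.supp) ∩ ↑X).ncard < ((Subtype.val '' c.supp) ∩ ↑Y).ncard}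
      ≤ S.card := by
  classical
  set H := G.induce {v : V | v ∉ S} with hH
  -- membership in the image of a component's support
  have hmem : ∀ (c : H.ConnectedComponent) (v : V),
      v ∈ Subtype.val '' c.supp ↔ ∃ h : v ∉ S, H.connectedComponentMk ⟨v, h⟩ = c := by
    intro c v
    constructor
    · rintro ⟨u, hu, rfl⟩
      exact ⟨u.2, by simpa [SimpleGraph.ConnectedComponent.mem_supp_iff] using hu⟩
    · rintro ⟨h, hc⟩
      exact ⟨⟨v, h⟩, by simpa [SimpleGraph.ConnectedComponent.mem_supp_iff] using hc, rfl⟩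
  -- finset version of the support
  set T : H.ConnectedComponent → Finset V := fun c =>
    Finset.univ.filter (fun v => ∃ h : v ∉ S, H.connectedComponentMk ⟨v, h⟩ = c) with hTdef
  have hTmem : ∀ c v, v ∈ T c ↔ ∃ h : v ∉ S, H.connectedComponentMk ⟨v, h⟩ = c := by
    intro c v; simp [hTdef]
  have hT : ∀ c, (↑(T c) : Set V) = Subtype.val '' c.supp := by
    intro c; ext v; simp only [Finset.mem_coe, hTmem, hmem]
  have hTnotS : ∀ c v, v ∈ T c → v ∉ S := by
    intro c v hv; exact ((hTmem c v).1 hv).1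
  -- edges-to-S counting function
  set f : V → ℕ := fun v => (S.filter (fun s => G.Adj v s)).card with hfdef
  -- total count
  have htotal : ∑ v : V, f v = k * S.card := by
    calc ∑ v : V, f v = ∑ v : V, ∑ s ∈ S, if G.Adj v s then 1 else 0 := by
          simp only [hfdef, Finset.card_filter]
      _ = ∑ s ∈ S, ∑ v : V, if G.Adj v s then 1 else 0 := Finset.sum_comm
      _ = ∑ s ∈ S, (Finset.univ.filter (fun v => G.Adj v s)).card := by
          simp only [Finset.card_filter]
      _ = ∑ s ∈ S, k := by
          refine Finset.sum_congr rfl fun s _ => ?_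
          have h1 : Finset.univ.filter (fun v => G.Adj v s) = G.neighborFinset s := by
            ext v; simp [SimpleGraph.adj_comm]
          rw [h1, SimpleGraph.card_neighborFinset_eq_degree, hreg]
      _ = k * S.card := by rw [Finset.sum_const, smul_eq_mul, mul_comm]
  -- disjointness of the T c
  have hTdisj : (↑(Finset.univ : Finset H.ConnectedComponent) : Set H.ConnectedComponent).PairwiseDisjoint T := by
    intro c _ c' _ hne
    rw [Function.onFun, Finset.disjoint_left]
    intro v hv hv'
    obtain ⟨h1, e1⟩ := (hTmem c v).1 hv
    obtain ⟨h2, e2⟩ := (hTmem c' v).1 hv'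
    exact hne (by rw [← e1, ← e2])
  -- per-component bound
  have hkey : ∀ c : H.ConnectedComponent,
      ((Subtype.val '' c.supp) ∩ ↑X).ncard < ((Subtype.val '' c.supp) ∩ ↑Y).ncard →
      k ≤ ∑ v ∈ T c, f v := by
    intro c hc
    set A := T c ∩ X with hA
    set B := T c ∩ Y with hB
    have hcard : A.card < B.card := by
      have eX : ((Subtype.val '' c.supp) ∩ ↑X).ncard = A.card := by
        rw [← hT c, ← Finset.coe_inter, Set.ncard_coe_finset]
      have eY : ((Subtype.val '' c.supp) ∩ ↑Y).ncard = B.card := by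
        rw [← hT c, ← Finset.coe_inter, Set.ncard_coe_finset]
      rw [eX, eY] at hc; exact hc
    -- closure of T c under adjacency avoiding S
    have hclose : ∀ v ∈ T c, ∀ w, G.Adj v w → w ∉ S → w ∈ T c := by
      intro v hv w hadj hw
      obtain ⟨h1, e1⟩ := (hTmem c v).1 hv
      refine (hTmem c w).2 ⟨hw, ?_⟩
      rw [← e1]
      apply SimpleGraph.ConnectedComponent.sound
      have : H.Adj ⟨w, hw⟩ ⟨v, h1⟩ := by
        simp only [hH, SimpleGraph.comap_adj, Function.Embedding.coe_subtype]
        exact hadj.symm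
      exact this.reachable
    -- neighbors from A land in B
    have hAB : ∀ x ∈ A, ∀ y, G.Adj x y → y ∈ B := by
      intro x hx y hadj
      have hxX : x ∈ X := (Finset.mem_inter.1 hx).2
      have hyY : y ∈ Y := by
        rcases hbip x y hadj with ⟨_, h⟩ | ⟨h, _⟩
        · exact h
        · exact absurd hxX (Finset.disjoint_right.1 hdisj h)
      have hyS : y ∉ S := fun h => Finset.disjoint_left.1 hdisj (hS h) hyY
      exact Finset.mem_inter.2 ⟨hclose x (Finset.mem_inter.1 hx).1 y hadj hyS, hyY⟩
    -- neighbors from B land in A ∪ S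
    have hBA : ∀ y ∈ B, ∀ x, G.Adj y x → x ∈ A ∨ x ∈ S := by
      intro y hy x hadj
      have hyY : y ∈ Y := (Finset.mem_inter.1 hy).2
      have hxX : x ∈ X := by
        rcases hbip y x hadj with ⟨h, _⟩ | ⟨_, h⟩
        · exact absurd hyY (Finset.disjoint_left.1 hdisj h)
        · exact h
      by_cases hxS : x ∈ S
      · exact Or.inr hxS
      · exact Or.inl (Finset.mem_inter.2 ⟨hclose y (Finset.mem_inter.1 hy).1 x hadj hxS, hxX⟩)
    -- all k neighbors of x ∈ A are in B
    have hEA : ∀ x ∈ A, (B.filter (fun y => G.Adj x y)).card = k := by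
      intro x hx
      have h1 : B.filter (fun y => G.Adj x y) = G.neighborFinset x := by
        ext y
        simp only [Finset.mem_filter, SimpleGraph.mem_neighborFinset]
        exact ⟨fun h => h.2, fun h => ⟨hAB x hx y h, h⟩⟩
      rw [h1, SimpleGraph.card_neighborFinset_eq_degree, hreg]
    -- for y ∈ B, neighbors split between A and S
    have hEB : ∀ y ∈ B, (A.filter (fun x => G.Adj y x)).card + f y = k := by
      intro y hy
      have hdAS : Disjoint A S := by
        rw [Finset.disjoint_left]
        intro x hx hxS
        exact hTnotS c x (Finset.mem_inter.1 hx).1 hxS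
      have h1 : A.filter (fun x => G.Adj y x) ∪ S.filter (fun s => G.Adj y s)
          = G.neighborFinset y := by
        ext x
        simp only [Finset.mem_union, Finset.mem_filter, SimpleGraph.mem_neighborFinset]
        constructor
        · rintro (⟨_, h⟩ | ⟨_, h⟩) <;> exact h
        · intro h
          rcases hBA y hy x h with h' | h'
          · exact Or.inl ⟨h', h⟩
          · exact Or.inr ⟨h', h⟩
      have h2 : Disjoint (A.filter (fun x => G.Adj y x)) (S.filter (fun s => G.Adj y s)) :=
        Finset.disjoint_filter_filter hdAS
      have h3 := Finset.card_union_of_disjoint h2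
      rw [h1, SimpleGraph.card_neighborFinset_eq_degree, hreg] at h3
      exact h3.symm
    -- double counting edges between A and B
    have hswap : ∑ x ∈ A, (B.filter (fun y => G.Adj x y)).card
        = ∑ y ∈ B, (A.filter (fun x => G.Adj y x)).card := by
      simp only [Finset.card_filter]
      rw [Finset.sum_comm]
      refine Finset.sum_congr rfl fun y _ => Finset.sum_congr rfl fun x _ => ?_
      exact if_congr (G.adj_comm x y) rfl rfl
    have hsumA : ∑ x ∈ A, (B.filter (fun y => G.Adj x y)).card = k * A.card := by
      rw [Finset.sum_congr rfl hEA, Finset.sum_const, smul_eq_mul, mul_comm]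
    have hsumB : ∑ y ∈ B, ((A.filter (fun x => G.Adj y x)).card + f y) = k * B.card := by
      rw [Finset.sum_congr rfl hEB, Finset.sum_const, smul_eq_mul, mul_comm]
    rw [Finset.sum_add_distrib] at hsumB
    have heq : k * A.card + ∑ y ∈ B, f y = k * B.card := by
      rw [← hsumA, hswap]; exact hsumB
    have hmul : k * (A.card + 1) ≤ k * B.card := Nat.mul_le_mul_left k hcard
    have hBk : k ≤ ∑ y ∈ B, f y := by
      have : k * (A.card + 1) = k * A.card + k := by ring
      omega
    have hsub : ∑ y ∈ B, f y ≤ ∑ v ∈ T c, f v :=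
      Finset.sum_le_sum_of_subset (Finset.inter_subset_left)
    omega
  -- assemble
  set bad : Finset H.ConnectedComponent := Finset.univ.filter
    (fun c => ((Subtype.val '' c.supp) ∩ ↑X).ncard < ((Subtype.val '' c.supp) ∩ ↑Y).ncard)
    with hbad
  have hgoal : Set.ncard {c : H.ConnectedComponent |
      ((Subtype.val '' c.supp) ∩ ↑X).ncard < ((Subtype.val '' c.supp) ∩ ↑Y).ncard}
      = bad.card := by
    have : {c : H.ConnectedComponent |
        ((Subtype.val '' c.supp) ∩ ↑X).ncard < ((Subtype.val '' c.supp) ∩ ↑Y).ncard}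
        = ↑bad := by
      ext c; simp [hbad]
    rw [this, Set.ncard_coe_finset]
  rw [hgoal]
  have h1 : k * bad.card ≤ ∑ c ∈ bad, ∑ v ∈ T c, f v := by
    calc k * bad.card = ∑ _c ∈ bad, k := by rw [Finset.sum_const, smul_eq_mul, mul_comm]
      _ ≤ ∑ c ∈ bad, ∑ v ∈ T c, f v :=
          Finset.sum_le_sum (fun c hc => hkey c (by simpa [hbad] using hc))
  have h2 : ∑ c ∈ bad, ∑ v ∈ T c, f v = ∑ v ∈ bad.biUnion T, f v :=
    (Finset.sum_biUnion (hTdisj.subset (by intro c _; exact Finset.mem_coe.2 (Finset.mem_univ c)))).symm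
  have h3 : ∑ v ∈ bad.biUnion T, f v ≤ ∑ v : V, f v :=
    Finset.sum_le_sum_of_subset (Finset.subset_univ _)
  have : k * bad.card ≤ k * S.card := by
    rw [← htotal]; omega
  exact Nat.le_of_mul_le_mul_left this hk
end
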